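/- For every 1 ≤ p < ∞, every f ∈ C[a,b], every ε > 0, and all constants c₁, c₂, there exists g ∈ C¹[a,b] such that ‖g − f‖_{L^p[a,b]} < ε, g(b) = g(a) + c₁, g'(b) = g'(a) + c₂, and ∫_a^b g(x) dx = ∫_a^b f(x) dx. -/

import Mathlib

private lemma aux_poly_contDiff (q : Polynomial ℝ) : ContDiff ℝ 1 (fun x => q.eval x) := by
  induction q using Polynomial.induction_on' with
  | add p q hp hq => simpa using hp.add hq
  | monomial n c =>
    simpa [Polynomial.eval_monomial] using contDiff_const.mul (contDiff_id.pow n)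

private lemma aux1 (m : ℕ) {w : ℝ} (h0 : 0 ≤ w) (h1 : w ≤ 1) :
    (m : ℝ) * (1 - w) * w ^ m ≤ 1 := by
  have hwm0 : (0:ℝ) ≤ w ^ m := pow_nonneg h0 m
  have h2 : 1 + (m:ℝ) * (1 - w) ≤ (1 + (1 - w)) ^ m := one_add_mul_le_pow (by linarith) m
  have h3 : ((2 - w) * w) ^ m ≤ 1 := pow_le_one₀ (by nlinarith) (by nlinarith)
  calc (m:ℝ) * (1 - w) * w ^ m ≤ (1 + (m:ℝ) * (1 - w)) * w ^ m := by nlinarith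
    _ ≤ (1 + (1 - w)) ^ m * w ^ m := mul_le_mul_of_nonneg_right h2 hwm0
    _ = ((2 - w) * w) ^ m := by rw [← mul_pow]; ring_nf
    _ ≤ 1 := h3

private lemma aux2 (m : ℕ) (u v : ℝ) {w : ℝ} (h0 : 0 ≤ w) (h1 : w ≤ 1) :
    |(u * (1 + (2 * (m:ℝ)) * (1 - w)) + v * (w - 1)) * w ^ (2 * m)|
      ≤ (3 * |u| + |v|) * w ^ m := by
  have hwm0 : (0:ℝ) ≤ w ^ m := pow_nonneg h0 m
  have hwm1 : w ^ m ≤ 1 := pow_le_one₀ h0 h1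
  have h2 : w ^ (2 * m) = w ^ m * w ^ m := by rw [two_mul, pow_add]
  have h3 := aux1 m h0 h1
  have habs : |u * (1 + (2 * (m:ℝ)) * (1 - w)) + v * (w - 1)|
      ≤ |u| * (1 + (2 * (m:ℝ)) * (1 - w)) + |v| * (1 - w) := by
    refine (abs_add_le _ _).trans ?_
    rw [abs_mul, abs_mul]
    have hm0 : (0:ℝ) ≤ (m:ℝ) := Nat.cast_nonneg m
    have e1 : |1 + (2 * (m:ℝ)) * (1 - w)| = 1 + (2 * (m:ℝ)) * (1 - w) :=
      abs_of_nonneg (by nlinarith)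
    have e2 : |w - 1| = 1 - w := by rw [abs_sub_comm, abs_of_nonneg (by linarith)]
    rw [e1, e2]
  rw [abs_mul, abs_pow, abs_of_nonneg h0]
  calc |u * (1 + (2 * (m:ℝ)) * (1 - w)) + v * (w - 1)| * w ^ (2 * m)
      ≤ (|u| * (1 + (2 * (m:ℝ)) * (1 - w)) + |v| * (1 - w)) * (w ^ m * w ^ m) := by
        rw [← h2]; exact mul_le_mul_of_nonneg_right habs (pow_nonneg h0 _)
    _ ≤ (3 * |u| + |v|) * w ^ m := by
        have tA : |u| * (w ^ m * w ^ m) ≤ |u| * w ^ m :=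
          mul_le_mul_of_nonneg_left (mul_le_of_le_one_left hwm0 hwm1) (abs_nonneg u)
        have tB : |u| * (((m:ℝ) * (1 - w) * w ^ m) * w ^ m) ≤ |u| * w ^ m :=
          mul_le_mul_of_nonneg_left
            (by simpa using mul_le_mul_of_nonneg_right h3 hwm0) (abs_nonneg u)
        have tC : |v| * ((1 - w) * (w ^ m * w ^ m)) ≤ |v| * w ^ m := by
          refine mul_le_mul_of_nonneg_left ?_ (abs_nonneg v)
          calc (1 - w) * (w ^ m * w ^ m) ≤ 1 * (w ^ m * w ^ m) :=
                mul_le_mul_of_nonneg_right (by linarith) (mul_nonneg hwm0 hwm0)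
            _ = w ^ m * w ^ m := one_mul _
            _ ≤ w ^ m := mul_le_of_le_one_left hwm0 hwm1
        calc (|u| * (1 + (2 * (m:ℝ)) * (1 - w)) + |v| * (1 - w)) * (w ^ m * w ^ m)
            = |u| * (w ^ m * w ^ m) + 2 * (|u| * (((m:ℝ) * (1 - w) * w ^ m) * w ^ m))
              + |v| * ((1 - w) * (w ^ m * w ^ m)) := by ring
          _ ≤ |u| * w ^ m + 2 * (|u| * w ^ m) + |v| * w ^ m := by linarith
          _ = (3 * |u| + |v|) * w ^ m := by ring

private lemma aux3 {a b : ℝ} (hab : a < b) (m : ℕ) :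
    ∫ x in a..b, ((x - a) / (b - a)) ^ m = (b - a) / (m + 1) := by
  have h0 : b - a ≠ 0 := sub_ne_zero.mpr hab.ne'
  have h1 : (∫ x in a..b, ((x - a) / (b - a)) ^ m)
      = ∫ x in a - a..b - a, (x / (b - a)) ^ m :=
    intervalIntegral.integral_comp_sub_right (fun x => (x / (b - a)) ^ m) a
  rw [h1, sub_self]
  rw [intervalIntegral.integral_comp_div (f := fun x => x ^ m) h0]
  rw [zero_div, div_self h0, integral_pow]
  simp [smul_eq_mul]
  ring

theorem stmt_5 (a b : ℝ) (hab : a < b) (p : ℝ) (hp : 1 ≤ p)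
    (f : ℝ → ℝ) (hf : ContinuousOn f (Set.Icc a b))
    (ε : ℝ) (hε : 0 < ε) (c1 c2 : ℝ) :
    ∃ g : ℝ → ℝ, ContDiffOn ℝ 1 g (Set.Icc a b) ∧
      (∫ x in a..b, |g x - f x| ^ p) ^ (1 / p) < ε ∧
      g b = g a + c1 ∧
      derivWithin g (Set.Icc a b) b = derivWithin g (Set.Icc a b) a + c2 ∧
      ∫ x in a..b, g x = ∫ x in a..b, f x := by
  have hba : (0:ℝ) < b - a := sub_pos.mpr hab
  have hba' : b - a ≠ 0 := hba.ne'
  have hIcc : Set.uIcc a b = Set.Icc a b := Set.uIcc_of_le hab.le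
  have hp0 : (0:ℝ) < p := lt_of_lt_of_le one_pos hp
  have h2p : (0:ℝ) < 2 ^ p := Real.rpow_pos_of_pos two_pos p
  set E := ε ^ p with hE
  have hE0 : 0 < E := Real.rpow_pos_of_pos hε p
  set T : ℝ := min 1 (E / (4 * 2 ^ p * (b - a))) with hT
  have hT0 : 0 < T := lt_min one_pos (div_pos hE0 (mul_pos (by positivity) hba))
  have hT1 : T ≤ 1 := min_le_left _ _
  obtain ⟨q, hq⟩ := exists_polynomial_near_of_continuousOn a b f hf (T / 4)
    (by positivity)
  set α : ℝ := c1 - (q.eval b - q.eval a) with hα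
  set β : ℝ := c2 - (q.derivative.eval b - q.derivative.eval a) with hβ
  set K : ℝ := 3 * |α| + |β| * (b - a) + 1 with hK
  have hK0 : 0 < K := by
    have h1 := abs_nonneg α; have h2 := abs_nonneg β
    nlinarith [mul_nonneg h2 hba.le]
  have hKp0 : (0:ℝ) < K ^ p := Real.rpow_pos_of_pos hK0 p
  obtain ⟨m, hm⟩ := exists_nat_gt (max (4 * K / T) (2 * (2 ^ p * K ^ p * (b - a)) / E))
  have hmpos : 0 < m := by
    rcases Nat.eq_zero_or_pos m with h | h
    · exfalso
      have h4 : 0 < 4 * K / T := div_pos (by linarith) hT0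
      have := (le_max_left (4 * K / T) (2 * (2 ^ p * K ^ p * (b - a)) / E)).trans_lt hm
      rw [h] at this; norm_num at this; linarith
    · exact h
  have hm1 : K / ((m:ℝ) + 1) < T / 4 := by
    have hu : 4 * K / T < (m:ℝ) + 1 :=
      ((le_max_left _ _).trans_lt hm).trans (lt_add_one _)
    rw [div_lt_iff₀ hT0] at hu
    rw [div_lt_div_iff₀ (by positivity) (by norm_num)]
    nlinarith
  have hm2 : 2 ^ p * K ^ p * (b - a) / ((m:ℝ) + 1) < E / 2 := by
    have hv : 2 * (2 ^ p * K ^ p * (b - a)) / E < (m:ℝ) + 1 :=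
      ((le_max_right _ _).trans_lt hm).trans (lt_add_one _)
    rw [div_lt_iff₀ hE0] at hv
    rw [div_lt_div_iff₀ (by positivity) (by norm_num)]
    nlinarith
  set w : ℝ → ℝ := fun x => (x - a) / (b - a) with hw
  have hw0 : ∀ x ∈ Set.Icc a b, 0 ≤ w x ∧ w x ≤ 1 := by
    intro x hx
    exact ⟨div_nonneg (by linarith [hx.1]) hba.le,
      (div_le_one hba).mpr (by linarith [hx.2])⟩
  have hwa : w a = 0 := by simp [hw]
  have hwb : w b = 1 := div_self hba'
  set β' : ℝ := β - (2 * (m:ℝ)) * α / (b - a) with hβ'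
  set H : ℝ → ℝ := fun x => (α + β' * (x - b)) * w x ^ (2 * m) with hH
  have hwc : Continuous w := (continuous_id.sub continuous_const).div_const _
  have hHc : Continuous H :=
    (continuous_const.add (continuous_const.mul (continuous_id.sub continuous_const))).mul
      ((hwc.pow (2 * m)))
  have hqc : Continuous fun x => q.eval x := q.continuous
  have hfint : IntervalIntegrable f MeasureTheory.volume a b :=
    ContinuousOn.intervalIntegrable (by rw [hIcc]; exact hf)
  have hqint := hqc.intervalIntegrable (μ := MeasureTheory.volume) a b
  have hHint := hHc.intervalIntegrable (μ := MeasureTheory.volume) a b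
  -- bound on H
  have hHb : ∀ x ∈ Set.Icc a b, |H x| ≤ K * w x ^ m := by
    intro x hx
    obtain ⟨h0, h1⟩ := hw0 x hx
    have key := aux2 m α (β * (b - a)) h0 h1
    have hxb : x - b = (b - a) * (w x - 1) := by
      rw [hw]; field_simp; ring
    have hrw : H x = (α * (1 + (2 * (m:ℝ)) * (1 - w x)) + (β * (b - a)) * (w x - 1))
        * w x ^ (2 * m) := by
      simp only [hH, hβ']
      rw [hxb]
      field_simp
      ring
    rw [hrw]
    refine key.trans ?_
    have hco : 3 * |α| + |β * (b - a)| ≤ K := by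
      rw [hK, abs_mul, abs_of_pos hba]; linarith
    exact mul_le_mul_of_nonneg_right hco (pow_nonneg h0 m)
  -- integral bound on H
  have hHIb : |∫ x in a..b, H x| ≤ K * ((b - a) / ((m:ℝ) + 1)) := by
    calc |∫ x in a..b, H x| ≤ ∫ x in a..b, |H x| :=
          intervalIntegral.abs_integral_le_integral_abs hab.le
      _ ≤ ∫ x in a..b, K * w x ^ m := by
          refine intervalIntegral.integral_mono_on hab.le
            (hHc.abs.intervalIntegrable a b)
            ((continuous_const.mul (hwc.pow m)).intervalIntegrable a b) hHb
      _ = K * ((b - a) / ((m:ℝ) + 1)) := by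
          rw [intervalIntegral.integral_const_mul]
          rw [show (fun x => w x ^ m) = fun x => ((x - a) / (b - a)) ^ m from rfl]
          rw [aux3 hab m]
  have hfqb : |(∫ x in a..b, f x) - ∫ x in a..b, q.eval x| ≤ T / 4 * (b - a) := by
    rw [← intervalIntegral.integral_sub hfint hqint]
    have hbd : ∀ x ∈ Set.uIoc a b, ‖f x - q.eval x‖ ≤ T / 4 := by
      intro x hx
      rw [Set.uIoc_of_le hab.le] at hx
      have hx' : x ∈ Set.Icc a b := Set.Ioc_subset_Icc_self hx
      rw [Real.norm_eq_abs, abs_sub_comm]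
      exact (hq x hx').le
    have := intervalIntegral.norm_integral_le_of_norm_le_const hbd
    rwa [Real.norm_eq_abs, abs_of_pos hba] at this
  set c : ℝ := ((∫ x in a..b, f x) - ∫ x in a..b, (q.eval x + H x)) / (b - a) with hc
  have hsplit : (∫ x in a..b, (q.eval x + H x))
      = (∫ x in a..b, q.eval x) + ∫ x in a..b, H x :=
    intervalIntegral.integral_add hqint hHint
  have hcb : |c| ≤ T / 2 := by
    have hnum : |(∫ x in a..b, f x) - ∫ x in a..b, (q.eval x + H x)| ≤ T / 2 * (b - a) := by
      rw [hsplit]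
      have e1 : (∫ x in a..b, f x) - ((∫ x in a..b, q.eval x) + ∫ x in a..b, H x)
          = ((∫ x in a..b, f x) - ∫ x in a..b, q.eval x) - ∫ x in a..b, H x := by ring
      rw [e1]
      have e2 : K * ((b - a) / ((m:ℝ) + 1)) ≤ T / 4 * (b - a) := by
        have : K / ((m:ℝ) + 1) ≤ T / 4 := hm1.le
        calc K * ((b - a) / ((m:ℝ) + 1)) = K / ((m:ℝ) + 1) * (b - a) := by ring
          _ ≤ T / 4 * (b - a) := mul_le_mul_of_nonneg_right this hba.le
      calc |((∫ x in a..b, f x) - ∫ x in a..b, q.eval x) - ∫ x in a..b, H x|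
          ≤ |(∫ x in a..b, f x) - ∫ x in a..b, q.eval x| + |∫ x in a..b, H x| :=
            abs_sub _ _
        _ ≤ T / 4 * (b - a) + T / 4 * (b - a) := add_le_add hfqb (hHIb.trans e2)
        _ = T / 2 * (b - a) := by ring
    rw [hc, abs_div, abs_of_pos hba, div_le_iff₀ hba]
    linarith
  set g : ℝ → ℝ := fun x => q.eval x + H x + c with hg
  have hHcd : ContDiff ℝ 1 H :=
    (contDiff_const.add (contDiff_const.mul (contDiff_id.sub contDiff_const))).mul
      (((contDiff_id.sub contDiff_const).div_const _).pow _)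
  have hgcd : ContDiff ℝ 1 g := ((aux_poly_contDiff q).add hHcd).add contDiff_const
  have hgc : Continuous g := hgcd.continuous
  -- derivative of g
  have hg' : ∀ x, HasDerivAt g
      (q.derivative.eval x + (β' * w x ^ (2 * m)
        + (α + β' * (x - b)) * ((2 * m : ℕ) * w x ^ (2 * m - 1) * (1 / (b - a))))) x := by
    intro x
    have h1 : HasDerivAt w (1 / (b - a)) x := by
      simpa using ((hasDerivAt_id x).sub_const a).div_const (b - a)
    have h2 : HasDerivAt (fun y => w y ^ (2 * m))
        ((2 * m : ℕ) * w x ^ (2 * m - 1) * (1 / (b - a))) x := h1.pow _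
    have h3 : HasDerivAt (fun y => α + β' * (y - b)) β' x := by
      simpa using (((hasDerivAt_id x).sub_const b).const_mul β').const_add α
    have h4 : HasDerivAt H
        (β' * w x ^ (2 * m)
          + (α + β' * (x - b)) * ((2 * m : ℕ) * w x ^ (2 * m - 1) * (1 / (b - a)))) x := by
      exact h3.mul h2
    exact ((q.hasDerivAt x).add h4).add_const c
  have hud := uniqueDiffOn_Icc hab
  have haI : a ∈ Set.Icc a b := ⟨le_refl a, hab.le⟩
  have hbI : b ∈ Set.Icc a b := ⟨hab.le, le_refl b⟩
  have hmm : 2 * m ≠ 0 := by omega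
  have hmm1 : 2 * m - 1 ≠ 0 := by omega
  have hda : derivWithin g (Set.Icc a b) a = q.derivative.eval a := by
    rw [(hg' a).differentiableAt.derivWithin (hud a haI), (hg' a).deriv, hwa]
    rw [zero_pow hmm, zero_pow hmm1]
    ring
  have hdb : derivWithin g (Set.Icc a b) b = q.derivative.eval b + β := by
    rw [(hg' b).differentiableAt.derivWithin (hud b hbI), (hg' b).deriv, hwb]
    rw [one_pow, one_pow, hβ']
    push_cast
    field_simp
    ring
  refine ⟨g, hgcd.contDiffOn, ?_, ?_, ?_, ?_⟩
  · -- Lp bound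
    have hpt : ∀ x ∈ Set.Icc a b, |g x - f x| ^ p ≤ 2 ^ p * T + 2 ^ p * K ^ p * w x ^ m := by
      intro x hx
      obtain ⟨h0, h1⟩ := hw0 x hx
      have hwm0 : (0:ℝ) ≤ w x ^ m := pow_nonneg h0 m
      have hwm1 : w x ^ m ≤ 1 := pow_le_one₀ h0 h1
      have e1 : |g x - f x| ≤ T + K * w x ^ m := by
        have erw : g x - f x = (q.eval x - f x) + H x + c := by rw [hg]; ring
        calc |g x - f x| ≤ |q.eval x - f x| + |H x| + |c| := by
              rw [erw]; exact (abs_add_le _ _).trans (add_le_add_left (abs_add_le _ _) _)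
          _ ≤ T / 4 + K * w x ^ m + T / 2 :=
              add_le_add (add_le_add (hq x hx).le (hHb x hx)) hcb
          _ ≤ T + K * w x ^ m := by linarith
      set M := max T (K * w x ^ m) with hM
      have hM0 : 0 < M := lt_max_iff.mpr (Or.inl hT0)
      have e2 : |g x - f x| ^ p ≤ (2 * M) ^ p := by
        refine Real.rpow_le_rpow (abs_nonneg _) ?_ hp0.le
        have l1 := le_max_left T (K * w x ^ m)
        have l2 := le_max_right T (K * w x ^ m)
        linarith [e1]
      have e3 : (2 * M) ^ p = 2 ^ p * M ^ p := Real.mul_rpow (by norm_num) hM0.le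
      have e4 : M ^ p ≤ T ^ p + (K * w x ^ m) ^ p := by
        rcases max_cases T (K * w x ^ m) with ⟨hMe, _⟩ | ⟨hMe, _⟩ <;> rw [hM, hMe]
        · linarith [Real.rpow_nonneg (mul_nonneg hK0.le hwm0) p]
        · linarith [Real.rpow_nonneg hT0.le p]
      have e5 : T ^ p ≤ T := by
        calc T ^ p ≤ T ^ (1:ℝ) := Real.rpow_le_rpow_of_exponent_ge hT0 hT1 hp
          _ = T := Real.rpow_one T
      have e6 : (K * w x ^ m) ^ p ≤ K ^ p * w x ^ m := by
        rw [Real.mul_rpow hK0.le hwm0]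
        refine mul_le_mul_of_nonneg_left ?_ (Real.rpow_nonneg hK0.le p)
        rcases eq_or_lt_of_le hwm0 with h | h
        · rw [← h, Real.zero_rpow hp0.ne']
        · calc (w x ^ m) ^ p ≤ (w x ^ m) ^ (1:ℝ) :=
              Real.rpow_le_rpow_of_exponent_ge h hwm1 hp
            _ = w x ^ m := Real.rpow_one _
      calc |g x - f x| ^ p ≤ 2 ^ p * M ^ p := e2.trans_eq e3
        _ ≤ 2 ^ p * (T ^ p + (K * w x ^ m) ^ p) := mul_le_mul_of_nonneg_left e4 h2p.le
        _ ≤ 2 ^ p * (T + K ^ p * w x ^ m) := mul_le_mul_of_nonneg_left (by linarith) h2p.le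
        _ = 2 ^ p * T + 2 ^ p * K ^ p * w x ^ m := by ring
    have hlint : IntervalIntegrable (fun x => |g x - f x| ^ p) MeasureTheory.volume a b := by
      apply ContinuousOn.intervalIntegrable
      rw [hIcc]
      exact ((hgc.continuousOn.sub hf).abs).rpow_const (fun x hx => Or.inr hp0.le)
    have hrint : IntervalIntegrable (fun x => 2 ^ p * T + 2 ^ p * K ^ p * w x ^ m)
        MeasureTheory.volume a b :=
      (continuous_const.add (continuous_const.mul (hwc.pow m))).intervalIntegrable a b
    have hint_le : (∫ x in a..b, |g x - f x| ^ p)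
        ≤ 2 ^ p * T * (b - a) + 2 ^ p * K ^ p * ((b - a) / ((m:ℝ) + 1)) := by
      calc (∫ x in a..b, |g x - f x| ^ p)
          ≤ ∫ x in a..b, (2 ^ p * T + 2 ^ p * K ^ p * w x ^ m) :=
            intervalIntegral.integral_mono_on hab.le hlint hrint hpt
        _ = 2 ^ p * T * (b - a) + 2 ^ p * K ^ p * ((b - a) / ((m:ℝ) + 1)) := by
            rw [intervalIntegral.integral_add (f := fun _ => 2 ^ p * T)
              (g := fun x => 2 ^ p * K ^ p * w x ^ m) intervalIntegrable_const
              ((continuous_const.mul (hwc.pow m)).intervalIntegrable a b),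
              intervalIntegral.integral_const, intervalIntegral.integral_const_mul,
              smul_eq_mul]
            rw [show (fun x => w x ^ m) = fun x => ((x - a) / (b - a)) ^ m from rfl,
              aux3 hab m]
            ring
    have hb1 : 2 ^ p * T * (b - a) ≤ E / 4 := by
      have h := min_le_right 1 (E / (4 * 2 ^ p * (b - a)))
      calc 2 ^ p * T * (b - a) ≤ 2 ^ p * (E / (4 * 2 ^ p * (b - a))) * (b - a) :=
            mul_le_mul_of_nonneg_right (mul_le_mul_of_nonneg_left h h2p.le) hba.le
        _ = E / 4 := by field_simp
    have hb2 : 2 ^ p * K ^ p * ((b - a) / ((m:ℝ) + 1)) < E / 2 := by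
      calc 2 ^ p * K ^ p * ((b - a) / ((m:ℝ) + 1))
          = 2 ^ p * K ^ p * (b - a) / ((m:ℝ) + 1) := by ring
        _ < E / 2 := hm2
    have hlt : (∫ x in a..b, |g x - f x| ^ p) < E := by linarith
    have hnn : 0 ≤ ∫ x in a..b, |g x - f x| ^ p :=
      intervalIntegral.integral_nonneg hab.le (fun x _ => Real.rpow_nonneg (abs_nonneg _) p)
    have hfin : (∫ x in a..b, |g x - f x| ^ p) ^ (1 / p) < E ^ (1 / p) :=
      Real.rpow_lt_rpow hnn hlt (by positivity)
    have hEp : E ^ (1 / p) = ε := by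
      rw [hE, ← Real.rpow_mul hε.le, mul_one_div, div_self hp0.ne', Real.rpow_one]
    rwa [hEp] at hfin
  · -- boundary values
    rw [hg]
    simp only [hH, hwa, hwb, zero_pow hmm, one_pow, sub_self, mul_zero, mul_one]
    rw [hα]; ring
  · rw [hda, hdb, hβ]; ring
  · have e1 : ∫ x in a..b, g x = (∫ x in a..b, (q.eval x + H x)) + (b - a) * c := by
      rw [hg]
      rw [intervalIntegral.integral_add (hqint.add hHint) intervalIntegrable_const,
        intervalIntegral.integral_const, smul_eq_mul]
    rw [e1, hc]
    field_simp
    ring
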